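/- Let X^n be uniform on {0,1}^n and Y^n its noiseless copy (δ = 0). For any f : {0,1}^n → {0,1} with P(f=1) = q ≤ 1/2, one has G_s(X^n | f(Y^n)) ≥ 2^{-(n-1)} ∑_{i=1}^{2^{n-1}} i^s, with equality iff q = 1/2 (f balanced). Consequently γ_s(0) = 2^{-s}. -/

import Mathlib

open Finset Filter

/-- The minimal conditional `s`-th guessing moment `G_s(X^n | f(X^n))` in the noiseless case
(`δ = 0`, so `Y^n = X^n`): the infimum over guessing strategies (one ordering of `{0,1}^n`
for each value of the bit `f(X^n)`). -/
noncomputable def GcondNoiseless (s : ℝ) (n : ℕ) (f : (Fin n → Bool) → Bool) : ℝ :=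
  sInf {m : ℝ | ∃ g : Bool → ((Fin n → Bool) ≃ Fin (2 ^ n)),
    m = ∑ x : Fin n → Bool, (2 : ℝ) ^ (-(n : ℝ)) * (((g (f x) x : ℕ) + 1 : ℝ)) ^ s}

/-- The unconditional guessing moment `G_s(X^n)` of a uniform vector on `{0,1}^n`. -/
noncomputable def Gunif (s : ℝ) (n : ℕ) : ℝ :=
  (2 : ℝ) ^ (-(n : ℝ)) * ∑ i ∈ Finset.Icc (1 : ℕ) (2 ^ n), (i : ℝ) ^ s

/-- `P(f(X^n) = 1)` for uniform `X^n`. -/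
noncomputable def bias (n : ℕ) (f : (Fin n → Bool) → Bool) : ℝ :=
  ((Finset.univ.filter fun x : Fin n → Bool => f x = true).card : ℝ) / 2 ^ n

open Real Topology

noncomputable def TT (s : ℝ) (b : ℕ) : ℝ := ∑ j ∈ Finset.range b, ((j : ℝ) + 1) ^ s

theorem sum_Icc_eq_TT (s : ℝ) (b : ℕ) :
    ∑ i ∈ Finset.Icc (1:ℕ) b, (i:ℝ)^s = TT s b := by
  rw [TT, ← Finset.Ico_add_one_right_eq_Icc, Finset.sum_Ico_eq_sum_range]
  simp [add_comm]

-- key monotone lemma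
theorem range_sum_le_of_monotone (F : ℕ → ℝ) (hF : Monotone F) (B : Finset ℕ) :
    ∑ i ∈ Finset.range B.card, F i ≤ ∑ j ∈ B, F j := by
  induction B using Finset.induction_on_max with
  | empty => simp
  | insert a B ha ih =>
    have haB : a ∉ B := fun h => lt_irrefl a (ha a h)
    have hsub : B ⊆ Finset.range a := fun x hx => Finset.mem_range.2 (ha x hx)
    have hcard : B.card ≤ a := by
      simpa using Finset.card_le_card hsub
    rw [Finset.card_insert_of_notMem haB, Finset.sum_insert haB, Finset.sum_range_succ]
    have := hF hcard
    linarith [ih]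

-- p * a^s ≤ (a+1)^p - a^p for a ≥ 1, p = s+1, s > 0
theorem bern_lower {s : ℝ} (hs : 0 < s) {a : ℝ} (ha : 1 ≤ a) :
    (s + 1) * a ^ s ≤ (a + 1) ^ (s + 1) - a ^ (s + 1) := by
  have ha0 : 0 < a := lt_of_lt_of_le one_pos ha
  have hb : (-1 : ℝ) ≤ 1 / a := by
    have : (0:ℝ) < 1 / a := by positivity
    linarith
  have hp : (1 : ℝ) ≤ s + 1 := by linarith
  have h := one_add_mul_self_le_rpow_one_add hb hp
  have hmul : (1 + (s+1) * (1/a)) * a ^ (s+1) ≤ (1 + 1/a) ^ (s+1) * a ^ (s+1) := by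
    exact mul_le_mul_of_nonneg_right h (Real.rpow_nonneg ha0.le _)
  rw [← Real.mul_rpow (by positivity) ha0.le] at hmul
  have h1 : (1 + 1/a) * a = a + 1 := by field_simp
  rw [h1] at hmul
  have h2 : a ^ (s + 1) = a ^ s * a := Real.rpow_add_one ha0.ne' s
  have h3 : (1 + (s+1) * (1/a)) * a ^ (s+1) = a ^ (s+1) + (s+1) * a^s := by
    rw [h2]; field_simp
  rw [h3] at hmul
  linarith

-- (a+1)^p - a^p ≤ p * (a+1)^s for a ≥ 0
theorem bern_upper {s : ℝ} (hs : 0 < s) {a : ℝ} (ha : 0 ≤ a) :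
    (a + 1) ^ (s + 1) - a ^ (s + 1) ≤ (s + 1) * (a + 1) ^ s := by
  have ha1 : (0:ℝ) < a + 1 := by linarith
  have hb : (-1 : ℝ) ≤ -(1 / (a+1)) := by
    rw [neg_le_neg_iff]
    rw [div_le_one ha1]; linarith
  have hp : (1 : ℝ) ≤ s + 1 := by linarith
  have h := one_add_mul_self_le_rpow_one_add hb hp
  have hmul : (1 + (s+1) * (-(1/(a+1)))) * (a+1) ^ (s+1) ≤
      (1 + -(1/(a+1))) ^ (s+1) * (a+1) ^ (s+1) := by
    apply mul_le_mul_of_nonneg_right h (Real.rpow_nonneg ha1.le _)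
  have hnn : (0:ℝ) ≤ 1 + -(1/(a+1)) := by
    have : 1/(a+1) ≤ 1 := by rw [div_le_one ha1]; linarith
    linarith
  rw [← Real.mul_rpow hnn ha1.le] at hmul
  have h1 : (1 + -(1/(a+1))) * (a+1) = a := by field_simp; ring
  rw [h1] at hmul
  have h2 : (a+1) ^ (s + 1) = (a+1) ^ s * (a+1) := Real.rpow_add_one ha1.ne' s
  have h3 : (1 + (s+1) * (-(1/(a+1)))) * (a+1) ^ (s+1) =
      (a+1) ^ (s+1) - (s+1) * (a+1)^s := by
    rw [h2]; field_simp; ring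
  rw [h3] at hmul
  linarith

theorem TT_lb {s : ℝ} (hs : 0 < s) (b : ℕ) : (b : ℝ) ^ (s + 1) ≤ (s + 1) * TT s b := by
  induction b with
  | zero => simp [TT, Real.zero_rpow (by linarith : s + 1 ≠ 0)]
  | succ b ih =>
    rw [TT, Finset.sum_range_succ, mul_add, ← TT]
    rcases Nat.eq_zero_or_pos b with rfl | hb
    · have : ((1:ℕ):ℝ) ^ (s+1) = 1 := by norm_num
      simp [TT, Real.one_rpow]
      nlinarith [Real.one_rpow s]
    · have h1 : (1:ℝ) ≤ (b:ℝ) := by exact_mod_cast hb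
      have := bern_upper hs (le_trans zero_le_one h1 : (0:ℝ) ≤ (b:ℝ))
      push_cast
      push_cast at ih
      linarith

theorem TT_ub {s : ℝ} (hs : 0 < s) (b : ℕ) : (s + 1) * TT s b ≤ ((b : ℝ) + 1) ^ (s + 1) - 1 := by
  induction b with
  | zero => simp [TT, Real.one_rpow]
  | succ b ih =>
    rw [TT, Finset.sum_range_succ, mul_add, ← TT]
    have h1 : (1:ℝ) ≤ (b:ℝ) + 1 := by have : (0:ℝ) ≤ (b:ℝ) := Nat.cast_nonneg b; linarith
    have := bern_lower hs h1
    push_cast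
    push_cast at ih
    linarith

section RankSection
variable {α : Type*} [Fintype α] [DecidableEq α]

/-- An equiv `α ≃ Fin (card α)` placing the elements of `A` first. -/
noncomputable def rankEquiv (A : Finset α) : α ≃ Fin (Fintype.card α) :=
  ((Equiv.sumCompl (· ∈ A)).symm.trans
    (Equiv.sumCongr A.equivFin
      (Fintype.equivFinOfCardEq (n := Fintype.card α - A.card) (by
        simp [Fintype.card_subtype_compl, Fintype.card_coe])))).trans
    ((finSumFinEquiv).trans (finCongr
      (Nat.add_sub_cancel' (Finset.card_le_univ A))))

theorem rankEquiv_mem (A : Finset α) {x : α} (hx : x ∈ A) :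
    ((rankEquiv A x : ℕ)) = (A.equivFin ⟨x, hx⟩ : ℕ) := by
  simp [rankEquiv, Equiv.sumCompl_symm_apply_of_pos hx]

theorem sum_rank (A : Finset α) (F : ℕ → ℝ) :
    ∑ x ∈ A, F ((rankEquiv A x : ℕ)) = ∑ j ∈ Finset.range A.card, F j := by
  rw [← Finset.sum_attach A (fun x => F ((rankEquiv A x : ℕ)))]
  have h1 : ∀ a : {x // x ∈ A}, F ((rankEquiv A a : ℕ)) = F ((A.equivFin a : ℕ)) := by
    intro a; rw [rankEquiv_mem A a.2]
  calc ∑ a ∈ A.attach, F ((rankEquiv A a : ℕ))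
      = ∑ a : {x // x ∈ A}, F ((A.equivFin a : ℕ)) := by
        rw [← Finset.univ_eq_attach]; exact Finset.sum_congr rfl (fun a _ => h1 a)
    _ = ∑ j : Fin A.card, F (j : ℕ) := A.equivFin.sum_comp (fun j => F (j : ℕ))
    _ = ∑ j ∈ Finset.range A.card, F j := by rw [Finset.sum_range fun j => F j]

end RankSection

theorem monoF {s : ℝ} (hs : 0 < s) : Monotone (fun j : ℕ => ((j:ℝ)+1)^s) := by
  intro i j hij
  have : ((i:ℝ)+1) ≤ ((j:ℝ)+1) := by
    have := (Nat.cast_le (α := ℝ)).2 hij; linarith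
  exact Real.rpow_le_rpow (by positivity) this hs.le

theorem Gcond_eq (s : ℝ) (hs : 0 < s) (n : ℕ) (f : (Fin n → Bool) → Bool) :
    GcondNoiseless s n f =
      (2:ℝ) ^ (-(n:ℝ)) *
        (TT s ((Finset.univ.filter fun x => f x = true).card) +
         TT s (2 ^ n - (Finset.univ.filter fun x => f x = true).card)) := by
  classical
  have hcard : Fintype.card (Fin n → Bool) = 2 ^ n := by simp
  set A : Finset (Fin n → Bool) := Finset.univ.filter fun x => f x = true with hA
  set B : Finset (Fin n → Bool) := Finset.univ.filter fun x => ¬ (f x = true) with hB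
  have hAB : A.card + B.card = 2 ^ n := by
    rw [hA, hB, Finset.card_filter_add_card_filter_not, Finset.card_univ, hcard]
  have hBcard : B.card = 2 ^ n - A.card := by omega
  set F : ℕ → ℝ := fun j => ((j:ℝ)+1)^s with hF
  have hsplit : ∀ g : Bool → ((Fin n → Bool) ≃ Fin (2 ^ n)),
      ∑ x : Fin n → Bool, (2 : ℝ) ^ (-(n : ℝ)) * (((g (f x) x : ℕ) + 1 : ℝ)) ^ s
        = (2:ℝ) ^ (-(n:ℝ)) * ((∑ x ∈ A, F ((g true x : ℕ))) + ∑ x ∈ B, F ((g false x : ℕ))) := by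
    intro g
    rw [← Finset.mul_sum]
    congr 1
    rw [← Finset.sum_filter_add_sum_filter_not Finset.univ (fun x => f x = true)]
    congr 1
    · exact Finset.sum_congr rfl (fun x hx => by
        rw [(Finset.mem_filter.1 hx).2])
    · exact Finset.sum_congr rfl (fun x hx => by
        rw [eq_false_of_ne_true (Finset.mem_filter.1 hx).2])
  rw [GcondNoiseless]
  apply IsLeast.csInf_eq
  constructor
  · -- membership: the optimal strategy
    refine ⟨fun b => if b then (rankEquiv A).trans (finCongr hcard)
                     else (rankEquiv B).trans (finCongr hcard), ?_⟩
    rw [hsplit (fun b => if b then (rankEquiv A).trans (finCongr hcard)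
                     else (rankEquiv B).trans (finCongr hcard))]
    have h1 : ∑ x ∈ A, F (((rankEquiv A).trans (finCongr hcard) x : ℕ)) = TT s A.card := by
      have he : ∀ x, (((rankEquiv A).trans (finCongr hcard) x : ℕ)) = ((rankEquiv A x : ℕ)) := by
        intro x; simp
      simp_rw [he]
      rw [sum_rank A F]; rfl
    have h2 : ∑ x ∈ B, F (((rankEquiv B).trans (finCongr hcard) x : ℕ)) = TT s (2^n - A.card) := by
      have he : ∀ x, (((rankEquiv B).trans (finCongr hcard) x : ℕ)) = ((rankEquiv B x : ℕ)) := by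
        intro x; simp
      simp_rw [he]
      rw [sum_rank B F, hBcard]; rfl
    simp only [if_true, Bool.false_eq_true, if_false] at *
    rw [h1, h2]
  · -- lower bound
    rintro m ⟨g, rfl⟩
    rw [hsplit]
    have key : ∀ (C : Finset (Fin n → Bool)) (e : (Fin n → Bool) ≃ Fin (2^n)),
        TT s C.card ≤ ∑ x ∈ C, F ((e x : ℕ)) := by
      intro C e
      have hinj : ∀ x ∈ C, ∀ y ∈ C, ((e x : ℕ)) = ((e y : ℕ)) → x = y := by
        intro x _ y _ h
        exact e.injective (Fin.val_injective h)
      rw [← Finset.sum_image hinj]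
      have hc : (C.image fun x => ((e x : ℕ))).card = C.card :=
        Finset.card_image_of_injOn (fun x hx y hy h => hinj x hx y hy h)
      calc TT s C.card = ∑ i ∈ Finset.range C.card, F i := rfl
        _ = ∑ i ∈ Finset.range (C.image fun x => ((e x : ℕ))).card, F i := by rw [hc]
        _ ≤ _ := range_sum_le_of_monotone F (monoF hs) _
    have hpos : (0:ℝ) ≤ (2:ℝ) ^ (-(n:ℝ)) := le_of_lt (Real.rpow_pos_of_pos two_pos _)
    apply mul_le_mul_of_nonneg_left _ hpos
    have k1 := key A (g true)
    have k2 := key B (g false)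
    rw [hBcard] at k2
    linarith

theorem TT_pair_strict {s : ℝ} (hs : 0 < s) {k m : ℕ} (hk : k < m) :
    2 * TT s m < TT s k + TT s (2 * m - k) := by
  have h1 : k ≤ m := hk.le
  have h2 : m ≤ 2 * m - k := by omega
  have e1 : TT s m = TT s k + ∑ j ∈ Finset.Ico k m, ((j:ℝ)+1)^s := by
    rw [TT, TT, Finset.range_eq_Ico, Finset.range_eq_Ico]
    exact (Finset.sum_Ico_consecutive _ (Nat.zero_le k) h1).symm
  have e2 : TT s (2*m - k) = TT s m + ∑ j ∈ Finset.Ico m (2*m - k), ((j:ℝ)+1)^s := by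
    rw [TT, TT, Finset.range_eq_Ico, Finset.range_eq_Ico]
    exact (Finset.sum_Ico_consecutive _ (Nat.zero_le m) h2).symm
  have key : ∑ j ∈ Finset.Ico k m, ((j:ℝ)+1)^s < ∑ j ∈ Finset.Ico m (2*m - k), ((j:ℝ)+1)^s := by
    rw [Finset.sum_Ico_eq_sum_range, Finset.sum_Ico_eq_sum_range]
    have hc : 2*m - k - m = m - k := by omega
    rw [hc]
    apply Finset.sum_lt_sum_of_nonempty
    · rw [Finset.nonempty_range_iff]; omega
    · intro j _
      apply Real.rpow_lt_rpow (by positivity) _ hs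
      have : (k:ℝ) < (m:ℝ) := by exact_mod_cast hk
      push_cast
      linarith
  linarith

theorem TT_pair_le {s : ℝ} (hs : 0 < s) {k m : ℕ} (hk : k ≤ 2 * m) :
    2 * TT s m ≤ TT s k + TT s (2 * m - k) := by
  rcases lt_trichotomy k m with h | rfl | h
  · exact (TT_pair_strict hs h).le
  · have : 2 * k - k = k := by omega
    rw [this]; ring_nf; rfl
  · have h2 : 2*m - k < m := by omega
    have := TT_pair_strict hs h2
    have e : 2*m - (2*m - k) = k := by omega
    rw [e] at this
    linarith

theorem TT_pos {s : ℝ} {b : ℕ} (hb : 1 ≤ b) : 0 < TT s b := by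
  apply Finset.sum_pos
  · intro j _; positivity
  · rw [Finset.nonempty_range_iff]; omega

theorem ratio_lb {s : ℝ} (hs : 0 < s) {b : ℕ} (hb : 1 ≤ b) :
    2 * ((b:ℝ) / (2*(b:ℝ)+1)) ^ (s+1) ≤ 2 * TT s b / TT s (2 * b) := by
  have hp0 : (0:ℝ) < s + 1 := by linarith
  have hb0 : (0:ℝ) < (b:ℝ) := by exact_mod_cast hb
  have hT2 : 0 < TT s (2*b) := TT_pos (by omega)
  have hXlb : (b:ℝ) ^ (s+1) / (s+1) ≤ TT s b := by
    rw [div_le_iff₀ hp0]; nlinarith [TT_lb hs b]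
  have hYub : TT s (2*b) ≤ (2*(b:ℝ)+1) ^ (s+1) / (s+1) := by
    have h := TT_ub hs (2*b)
    have hle : ((2*b : ℕ):ℝ) + 1 = 2*(b:ℝ)+1 := by push_cast; ring
    rw [hle] at h
    rw [le_div_iff₀ hp0]; nlinarith
  have hdpos : (0:ℝ) < (2*(b:ℝ)+1) ^ (s+1) := by positivity
  have heq : 2 * ((b:ℝ) / (2*(b:ℝ)+1)) ^ (s+1)
      = (2 * ((b:ℝ)^(s+1) / (s+1))) / ((2*(b:ℝ)+1)^(s+1) / (s+1)) := by
    rw [Real.div_rpow hb0.le (by positivity)]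
    field_simp
  rw [heq]
  have hnn : (0:ℝ) ≤ 2 * ((b:ℝ)^(s+1) / (s+1)) :=
    mul_nonneg (by norm_num) (div_nonneg (Real.rpow_nonneg hb0.le _) hp0.le)
  exact div_le_div₀ (by linarith [hXlb]) (by linarith [hXlb]) hT2 hYub

theorem ratio_ub {s : ℝ} (hs : 0 < s) {b : ℕ} (hb : 1 ≤ b) :
    2 * TT s b / TT s (2 * b) ≤ 2 * (((b:ℝ)+1) / (2*(b:ℝ))) ^ (s+1) := by
  have hp0 : (0:ℝ) < s + 1 := by linarith
  have hb0 : (0:ℝ) < (b:ℝ) := by exact_mod_cast hb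
  have hT2 : 0 < TT s (2*b) := TT_pos (by omega)
  have hXub : TT s b ≤ ((b:ℝ)+1) ^ (s+1) / (s+1) := by
    have h := TT_ub hs b
    rw [le_div_iff₀ hp0]; nlinarith
  have hYlb : (2*(b:ℝ)) ^ (s+1) / (s+1) ≤ TT s (2*b) := by
    have h := TT_lb hs (2*b)
    have hle : ((2*b : ℕ):ℝ) = 2*(b:ℝ) := by push_cast; ring
    rw [hle] at h
    rw [div_le_iff₀ hp0]; nlinarith
  have hdpos : (0:ℝ) < (2*(b:ℝ)) ^ (s+1) := by positivity
  have heq : 2 * (((b:ℝ)+1) / (2*(b:ℝ))) ^ (s+1)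
      = (2 * (((b:ℝ)+1)^(s+1) / (s+1))) / ((2*(b:ℝ))^(s+1) / (s+1)) := by
    rw [Real.div_rpow (by positivity) (by positivity)]
    field_simp
  rw [heq]
  have h2b0 : (0:ℝ) < 2*(b:ℝ) := by linarith
  have hnn : (0:ℝ) ≤ 2 * (((b:ℝ)+1)^(s+1) / (s+1)) :=
    mul_nonneg (by norm_num) (div_nonneg (Real.rpow_nonneg (by linarith) _) hp0.le)
  have hdp : (0:ℝ) < (2*(b:ℝ))^(s+1) / (s+1) :=
    div_pos (Real.rpow_pos_of_pos h2b0 _) hp0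
  exact div_le_div₀ (by linarith [hXub]) (by linarith [hXub]) hdp hYlb

theorem ratio_tendsto {s : ℝ} (hs : 0 < s) :
    Tendsto (fun b : ℕ => 2 * TT s b / TT s (2 * b)) atTop (𝓝 ((2:ℝ) ^ (-s))) := by
  have h2s : 2 * ((1:ℝ)/2) ^ (s+1) = (2:ℝ) ^ (-s) := by
    have e1 : ((1:ℝ)/2) ^ (s+1) = (2:ℝ) ^ (-(s+1)) := by
      rw [one_div, ← Real.rpow_neg_one (2:ℝ),
        ← Real.rpow_mul (by norm_num : (0:ℝ) ≤ 2)]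
      norm_num
    rw [e1]
    calc 2 * (2:ℝ)^(-(s+1)) = 2^(1:ℝ) * 2^(-(s+1)) := by rw [Real.rpow_one]
      _ = 2^(1 + -(s+1)) := (Real.rpow_add two_pos _ _).symm
      _ = 2^(-s) := by norm_num
  have hL : Tendsto (fun b : ℕ => 2 * ((b:ℝ) / (2*(b:ℝ)+1)) ^ (s+1)) atTop (𝓝 ((2:ℝ) ^ (-s))) := by
    rw [← h2s]
    have h1 : Tendsto (fun b : ℕ => (b:ℝ) / (2*(b:ℝ)+1)) atTop (𝓝 ((1:ℝ)/2)) := by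
      have h2 : Tendsto (fun b : ℕ => 2 + 1/(b:ℝ)) atTop (𝓝 2) := by
        have h0 := tendsto_one_div_atTop_nhds_zero_nat (𝕜 := ℝ)
        have h := tendsto_const_nhds (x := (2:ℝ)) (f := atTop (α := ℕ))
        simpa using h.add h0
      have h3 := h2.inv₀ (by norm_num : (2:ℝ) ≠ 0)
      rw [show (1:ℝ)/2 = 2⁻¹ by norm_num]
      apply Tendsto.congr' _ h3
      filter_upwards [eventually_ge_atTop 1] with b hb
      have hb0 : (0:ℝ) < (b:ℝ) := by exact_mod_cast hb
      have hx : (2 + 1/(b:ℝ)) = (2*(b:ℝ)+1)/(b:ℝ) := by field_simp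
      rw [hx, inv_div]
    exact (h1.rpow_const (Or.inl (by norm_num))).const_mul 2
  have hU : Tendsto (fun b : ℕ => 2 * (((b:ℝ)+1) / (2*(b:ℝ))) ^ (s+1)) atTop (𝓝 ((2:ℝ) ^ (-s))) := by
    rw [← h2s]
    have h1 : Tendsto (fun b : ℕ => ((b:ℝ)+1) / (2*(b:ℝ))) atTop (𝓝 ((1:ℝ)/2)) := by
      have he : ∀ᶠ b : ℕ in atTop, (1:ℝ)/2 + 1/2 * (1/(b:ℝ)) = ((b:ℝ)+1) / (2*(b:ℝ)) := by
        filter_upwards [eventually_ge_atTop 1] with b hb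
        have hb0 : (0:ℝ) < (b:ℝ) := by exact_mod_cast hb
        field_simp
      apply Tendsto.congr' he
      have h0 := (tendsto_one_div_atTop_nhds_zero_nat).const_mul (1/2 : ℝ)
      have h := tendsto_const_nhds (x := (1/2:ℝ)) (f := atTop (α := ℕ))
      simpa using h.add h0
    exact (h1.rpow_const (Or.inl (by norm_num))).const_mul 2
  apply tendsto_of_tendsto_of_tendsto_of_le_of_le' hL hU
  · filter_upwards [eventually_ge_atTop 1] with b hb
    exact ratio_lb hs hb
  · filter_upwards [eventually_ge_atTop 1] with b hb
    exact ratio_ub hs hb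

theorem card_fin_lt {N m : ℕ} (h : m ≤ N) :
    ((Finset.univ : Finset (Fin N)).filter fun j : Fin N => (j : ℕ) < m).card = m := by
  have : ((Finset.univ : Finset (Fin N)).filter fun j : Fin N => (j : ℕ) < m) =
      (Finset.univ : Finset (Fin m)).map (Fin.castLEEmb h) := by
    ext j
    simp only [Finset.mem_filter, Finset.mem_univ, true_and, Finset.mem_map,
      Fin.castLEEmb_apply]
    constructor
    · intro hj; exact ⟨⟨j.1, hj⟩, by ext; simp⟩
    · rintro ⟨i, rfl⟩; simpa using i.2
  rw [this, Finset.card_map, Finset.card_univ, Fintype.card_fin]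

theorem exists_balanced (n : ℕ) :
    ∃ f : (Fin n → Bool) → Bool,
      (Finset.univ.filter fun x => f x = true).card = 2 ^ (n - 1) := by
  have hcard : Fintype.card (Fin n → Bool) = 2 ^ n := by simp
  let E : (Fin n → Bool) ≃ Fin (2 ^ n) := Fintype.equivFinOfCardEq hcard
  refine ⟨fun x => decide ((E x : ℕ) < 2 ^ (n - 1)), ?_⟩
  have h1 : (Finset.univ.filter fun x => (decide ((E x : ℕ) < 2 ^ (n-1))) = true) =
      (Finset.univ.filter fun x => (E x : ℕ) < 2 ^ (n-1)) := by
    simp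
  rw [h1]
  have h2 : (Finset.univ.filter fun x => (E x : ℕ) < 2 ^ (n-1)).card =
      ((Finset.univ : Finset (Fin (2^n))).filter fun j : Fin (2^n) => (j : ℕ) < 2 ^ (n-1)).card := by
    apply Finset.card_bij (fun x _ => E x)
    · intro x hx
      simp only [Finset.mem_filter, Finset.mem_univ, true_and] at hx ⊢
      exact hx
    · intro x _ y _ hxy; exact E.injective hxy
    · intro j hj
      refine ⟨E.symm j, ?_, by simp⟩
      simp only [Finset.mem_filter, Finset.mem_univ, true_and] at hj ⊢
      simpa using hj
  rw [h2, card_fin_lt (Nat.pow_le_pow_right (by norm_num) (Nat.sub_le n 1))]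

/-- In the noiseless case, any `f` with `P(f=1) = q ≤ 1/2` satisfies
`G_s(X^n|f(X^n)) ≥ 2^{-(n-1)} ∑_{i=1}^{2^{n-1}} i^s`, with equality iff `q = 1/2`;
consequently `γ_s(0) = 2^{-s}`. -/
theorem noiseless_balanced_optimal (s : ℝ) (hs : 0 < s) :
    (∀ n : ℕ, 1 ≤ n → ∀ f : (Fin n → Bool) → Bool, bias n f ≤ 1 / 2 →
      ((2 : ℝ) ^ (-((n : ℝ) - 1)) * ∑ i ∈ Finset.Icc (1 : ℕ) (2 ^ (n - 1)), (i : ℝ) ^ s) ≤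
          GcondNoiseless s n f ∧
        (GcondNoiseless s n f =
            (2 : ℝ) ^ (-((n : ℝ) - 1)) * ∑ i ∈ Finset.Icc (1 : ℕ) (2 ^ (n - 1)), (i : ℝ) ^ s ↔
          bias n f = 1 / 2)) ∧
    Tendsto (fun n : ℕ =>
        sInf {r : ℝ | ∃ f : (Fin n → Bool) → Bool, r = GcondNoiseless s n f / Gunif s n})
      atTop (nhds ((2 : ℝ) ^ (-s))) := by
  have h2posR : ∀ nn : ℕ, (0:ℝ) < (2:ℝ) ^ (-(nn:ℝ)) :=
    fun nn => Real.rpow_pos_of_pos two_pos _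
  constructor
  · -- Part 1
    intro n hn f hq
    set k := (Finset.univ.filter fun x : Fin n → Bool => f x = true).card with hkdef
    set m := 2 ^ (n - 1) with hmdef
    have h2n : 2 ^ n = 2 * m := by
      rw [hmdef]
      conv_lhs => rw [show n = (n-1)+1 by omega]
      rw [pow_succ]; ring
    have hk2n : k ≤ 2 ^ n := by
      have h1 := Finset.card_filter_le (Finset.univ : Finset (Fin n → Bool))
        (fun x => f x = true)
      have h2 : (Finset.univ : Finset (Fin n → Bool)).card = 2 ^ n := by
        rw [Finset.card_univ]; simp
      omega
    have hbias : bias n f = (k:ℝ) / (2:ℝ)^n := rfl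
    have h2nr : (2:ℝ)^n = ((2^n : ℕ) : ℝ) := by push_cast; ring
    have hkm : k ≤ m := by
      rw [hbias] at hq
      have h2pos : (0:ℝ) < (2:ℝ)^n := by positivity
      rw [div_le_div_iff₀ h2pos (by norm_num)] at hq
      have h3 : ((2*k : ℕ) : ℝ) ≤ ((2^n : ℕ) : ℝ) := by push_cast; push_cast at hq; linarith
      have : 2 * k ≤ 2 ^ n := by exact_mod_cast h3
      omega
    have hG := Gcond_eq s hs n f
    rw [← hkdef] at hG
    have hval : (2:ℝ)^(-((n:ℝ)-1)) * ∑ i ∈ Finset.Icc (1:ℕ) (2^(n-1)), (i:ℝ)^s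
        = (2:ℝ)^(-(n:ℝ)) * (2 * TT s m) := by
      rw [sum_Icc_eq_TT, show -((n:ℝ)-1) = (-(n:ℝ)) + 1 by ring,
        Real.rpow_add two_pos, Real.rpow_one, ← hmdef]
      ring
    have hsub : 2 ^ n - k = 2 * m - k := by omega
    constructor
    · rw [hG, hval]
      apply mul_le_mul_of_nonneg_left _ (h2posR n).le
      rw [hsub]
      exact TT_pair_le hs (by omega)
    · constructor
      · intro hEq
        rw [hG, hval] at hEq
        have hcancel : TT s k + TT s (2^n - k) = 2 * TT s m :=
          mul_left_cancel₀ (ne_of_gt (h2posR n)) hEq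
        have hkm' : k = m := by
          by_contra hne
          have hlt : k < m := lt_of_le_of_ne hkm hne
          have hstrict := TT_pair_strict hs hlt
          rw [← hsub] at hstrict
          linarith
        rw [hbias, hkm', h2nr]
        rw [div_eq_div_iff (by positivity) (by norm_num)]
        have : ((2^n : ℕ) : ℝ) = 2 * (m:ℝ) := by exact_mod_cast h2n
        rw [this]; ring
      · intro hb
        rw [hbias, h2nr] at hb
        rw [div_eq_div_iff (by positivity) (by norm_num)] at hb
        have hkm' : k = m := by
          have h3 : ((2*k : ℕ) : ℝ) = ((2^n : ℕ) : ℝ) := by push_cast; linarith [hb]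
          have : (2*k : ℕ) = 2^n := by exact_mod_cast h3
          omega
        rw [hG, hval, hkm']
        have : 2 ^ n - m = m := by omega
        rw [this]
        ring
  · -- Part 2
    have hmT : Tendsto (fun n : ℕ => 2 ^ (n - 1)) atTop (atTop : Filter ℕ) := by
      apply tendsto_atTop_mono' atTop _ tendsto_id
      filter_upwards [eventually_ge_atTop 1] with n hn
      have h := Nat.lt_two_pow_self (n := n-1)
      simp only [id_eq]
      omega
    have hcomp := (ratio_tendsto hs).comp hmT
    apply Tendsto.congr' _ hcomp
    filter_upwards [eventually_ge_atTop 1] with n hn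
    set m := 2 ^ (n - 1) with hmdef
    have h2n : 2 ^ n = 2 * m := by
      rw [hmdef]
      conv_lhs => rw [show n = (n-1)+1 by omega]
      rw [pow_succ]; ring
    have hcompval : ((fun b : ℕ => 2 * TT s b / TT s (2 * b)) ∘ fun n : ℕ => 2 ^ (n-1)) n
        = 2 * TT s m / TT s (2^n) := by
      simp only [Function.comp, ← hmdef, ← h2n]
    rw [hcompval]
    have hGu : Gunif s n = (2:ℝ)^(-(n:ℝ)) * TT s (2^n) := by
      rw [Gunif, sum_Icc_eq_TT]
    have hGupos : 0 < Gunif s n := by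
      rw [hGu]
      exact mul_pos (h2posR n) (TT_pos (Nat.one_le_two_pow))
    symm
    apply IsLeast.csInf_eq
    constructor
    · -- membership via a balanced function
      obtain ⟨f₀, hf₀⟩ := exists_balanced n
      refine ⟨f₀, ?_⟩
      rw [Gcond_eq s hs n f₀, hf₀, ← hmdef, hGu]
      have hsub : 2 ^ n - m = m := by omega
      rw [hsub]
      rw [show TT s m + TT s m = 2 * TT s m by ring]
      rw [mul_div_mul_left _ _ (ne_of_gt (h2posR n))]
    · rintro r ⟨f, rfl⟩
      rw [Gcond_eq s hs n f, hGu]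
      set k := (Finset.univ.filter fun x : Fin n → Bool => f x = true).card with hkdef
      have hk2n : k ≤ 2 ^ n := by
        have h1 := Finset.card_filter_le (Finset.univ : Finset (Fin n → Bool))
          (fun x => f x = true)
        have h2 : (Finset.univ : Finset (Fin n → Bool)).card = 2 ^ n := by
          rw [Finset.card_univ]; simp
        omega
      have hpair : 2 * TT s m ≤ TT s k + TT s (2^n - k) := by
        have hsub : 2 ^ n - k = 2 * m - k := by omega
        rw [hsub]
        exact TT_pair_le hs (by omega)
      have hnum : (2:ℝ)^(-(n:ℝ)) * (2 * TT s m)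
          ≤ (2:ℝ)^(-(n:ℝ)) * (TT s k + TT s (2^n - k)) :=
        mul_le_mul_of_nonneg_left hpair (h2posR n).le
      calc 2 * TT s m / TT s (2^n)
          = ((2:ℝ)^(-(n:ℝ)) * (2 * TT s m)) / ((2:ℝ)^(-(n:ℝ)) * TT s (2^n)) := by
            rw [mul_div_mul_left _ _ (ne_of_gt (h2posR n))]
        _ ≤ _ := by
            gcongr
            first
            | exact mul_pos (h2posR n) (TT_pos (Nat.one_le_two_pow))
            | exact (mul_pos (h2posR n) (TT_pos (s := s) (Nat.one_le_two_pow))).le
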